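/- arXiv:2309.00596 — 2 statements merged into one kernel-verified Lean document; each statement's English description precedes it below -/
import Mathlib

section
/- If an algebraic curvature tensor 𝓡 on ℝ^n (n ≥ 3) is weakly PIC1, i.e. 𝓡(ω, ω̄) ≥ 0 for every nonzero simple isotropic ω ∈ Λ²ℂ^n, then the Ricci curvature of 𝓡 is nonnegative: Ric(𝓡)(u,u) ≥ 0 for all u ∈ ℝ^n. -/
open scoped BigOperators ComplexOrder
open Complex Matrix

noncomputable section

/-- Wedge product of two vectors, modelled as an antisymmetric matrix. -/
def wedge {n : ℕ} {𝕜 : Type} [CommRing 𝕜] (v w : Fin n → 𝕜) :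
    Matrix (Fin n) (Fin n) 𝕜 := fun i j => v i * w j - v j * w i

/-- Euclidean inner product on ℝ^n. -/
def gR {n : ℕ} (a b : Fin n → ℝ) : ℝ := ∑ i, a i * b i

/-- Complex-bilinear extension of the Euclidean inner product to ℂ^n. -/
def gC {n : ℕ} (v w : Fin n → ℂ) : ℂ := ∑ i, v i * w i

def vecConj {n : ℕ} (v : Fin n → ℂ) : Fin n → ℂ := fun i => (starRingEnd ℂ) (v i)

def vecC {n : ℕ} (a : Fin n → ℝ) : Fin n → ℂ := fun i => (a i : ℂ)

/-- Inner product on Λ²ℝ^n in the matrix model. -/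
def IR {n : ℕ} (α β : Matrix (Fin n) (Fin n) ℝ) : ℝ := (1/2) * (∑ i, ∑ j, α i j * β i j)

/-- Complex-bilinear extension of the inner product to Λ²ℂ^n. -/
def IC {n : ℕ} (ω η : Matrix (Fin n) (Fin n) ℂ) : ℂ := (1/2) * (∑ i, ∑ j, ω i j * η i j)

def matConj {n : ℕ} (ω : Matrix (Fin n) (Fin n) ℂ) : Matrix (Fin n) (Fin n) ℂ :=
  fun i j => (starRingEnd ℂ) (ω i j)

def matRe {n : ℕ} (ω : Matrix (Fin n) (Fin n) ℂ) : Matrix (Fin n) (Fin n) ℝ :=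
  fun i j => (ω i j).re

def matIm {n : ℕ} (ω : Matrix (Fin n) (Fin n) ℂ) : Matrix (Fin n) (Fin n) ℝ :=
  fun i j => (ω i j).im

def matC {n : ℕ} (α : Matrix (Fin n) (Fin n) ℝ) : Matrix (Fin n) (Fin n) ℂ :=
  fun i j => (α i j : ℂ)

/-- Λ²ℝ^n : antisymmetric real matrices. -/
def SkewR (n : ℕ) : Set (Matrix (Fin n) (Fin n) ℝ) := {M | Mᵀ = -M}

/-- Λ²ℂ^n : antisymmetric complex matrices. -/
def SkewC (n : ℕ) : Set (Matrix (Fin n) (Fin n) ℂ) := {M | Mᵀ = -M}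

/-- ω is simple: a nonzero wedge of two vectors. -/
def IsSimple {n : ℕ} (ω : Matrix (Fin n) (Fin n) ℂ) : Prop :=
  ω ≠ 0 ∧ ∃ v w : Fin n → ℂ, ω = wedge v w

/-- The type of (candidate) curvature tensors: bilinear forms on Λ²ℝ^n in the matrix model. -/
abbrev CurvOp (n : ℕ) := Matrix (Fin n) (Fin n) ℝ → Matrix (Fin n) (Fin n) ℝ → ℝ

structure IsSymmBilin {n : ℕ} (R : CurvOp n) : Prop where
  add_left : ∀ α β γ, R (α + β) γ = R α γ + R β γ
  smul_left : ∀ (c : ℝ) (α β), R (c • α) β = c * R α β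
  symm : ∀ α β, R α β = R β α

/-- First Bianchi identity. -/
def Bianchi {n : ℕ} (R : CurvOp n) : Prop :=
  ∀ v w x y : Fin n → ℝ,
    R (wedge v w) (wedge x y) + R (wedge v x) (wedge y w) + R (wedge v y) (wedge w x) = 0

/-- Complex-bilinear extension of a real bilinear form on Λ²ℝ^n to Λ²ℂ^n. -/
def RC {n : ℕ} (R : CurvOp n) (ω η : Matrix (Fin n) (Fin n) ℂ) : ℂ :=
  ((R (matRe ω) (matRe η) - R (matIm ω) (matIm η) : ℝ) : ℂ) +
    Complex.I * ((R (matRe ω) (matIm η) + R (matIm ω) (matRe η) : ℝ) : ℂ)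

/-- Standard basis vector of ℝ^n. -/
def stdB (n : ℕ) (j : Fin n) : Fin n → ℝ := fun k => if k = j then 1 else 0

/-- Ricci curvature of a curvature tensor. -/
def Ric {n : ℕ} (R : CurvOp n) (u : Fin n → ℝ) : ℝ :=
  ∑ j, R (wedge u (stdB n j)) (wedge u (stdB n j))

/-- Scalar curvature. -/
def Scal {n : ℕ} (R : CurvOp n) : ℝ := ∑ i, Ric R (stdB n i)
lemma wedge_sum_right {n : ℕ} (u v : Fin n → ℝ) :
    wedge u v = ∑ j, v j • wedge u (stdB n j) := by
  funext i k
  simp only [wedge, stdB, Matrix.sum_apply, Matrix.smul_apply, smul_eq_mul, mul_sub, mul_ite,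
    mul_one, mul_zero, Finset.sum_sub_distrib, Finset.sum_ite_eq, Finset.mem_univ, if_true]
  ring

lemma IC_wedge {n : ℕ} (a b c d : Fin n → ℂ) :
    IC (wedge a b) (wedge c d) = gC a c * gC b d - gC a d * gC b c := by
  unfold IC wedge gC
  have key : ∀ i j : Fin n, (a i * b j - a j * b i) * (c i * d j - c j * d i)
      = (a i * c i) * (b j * d j) + (a j * c j) * (b i * d i)
        - ((a i * d i) * (b j * c j) + (a j * d j) * (b i * c i)) := by
    intro i j; ring
  rw [Finset.sum_congr rfl fun i _ => Finset.sum_congr rfl fun j _ => key i j]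
  simp only [Finset.sum_add_distrib, Finset.sum_sub_distrib, ← Finset.sum_mul, ← Finset.mul_sum]
  ring

section lin
variable {n : ℕ} {R : CurvOp n} (hR : IsSymmBilin R)
include hR

lemma R_zero_left (β : Matrix (Fin n) (Fin n) ℝ) : R 0 β = 0 := by
  have := hR.smul_left 0 0 β
  simpa using this

lemma R_sum_left {ι : Type} (s : Finset ι) (f : ι → Matrix (Fin n) (Fin n) ℝ)
    (β : Matrix (Fin n) (Fin n) ℝ) : R (∑ i ∈ s, f i) β = ∑ i ∈ s, R (f i) β := by
  classical
  induction s using Finset.cons_induction with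
  | empty => simpa using R_zero_left hR β
  | cons a s ha ih => rw [Finset.sum_cons, hR.add_left, ih, Finset.sum_cons]

lemma R_neg_right (α β : Matrix (Fin n) (Fin n) ℝ) : R α (-β) = - R α β := by
  rw [hR.symm, show -β = (-1 : ℝ) • β by simp, hR.smul_left, hR.symm]; ring

lemma Q_expand (u v : Fin n → ℝ) :
    R (wedge u v) (wedge u v)
      = ∑ j, ∑ k, v j * v k * R (wedge u (stdB n j)) (wedge u (stdB n k)) := by
  rw [wedge_sum_right u v, R_sum_left hR]
  refine Finset.sum_congr rfl fun j _ => ?_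
  rw [hR.smul_left, hR.symm, R_sum_left hR, Finset.mul_sum]
  refine Finset.sum_congr rfl fun k _ => ?_
  rw [hR.smul_left, hR.symm]; ring
end lin

section pair
variable {n : ℕ} {R : CurvOp n}

lemma R_wedge_swap (hR : IsSymmBilin R) (a b : Fin n → ℝ) :
    R (wedge b a) (wedge b a) = R (wedge a b) (wedge a b) := by
  have hswap : wedge b a = (-1 : ℝ) • wedge a b := by
    funext i j; simp [wedge]; ring
  rw [hswap, hR.smul_left, hR.symm, hR.smul_left, hR.symm]; ring

lemma gC_vecC {n : ℕ} (a b : Fin n → ℝ) : gC (vecC a) (vecC b) = (gR a b : ℝ) := by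
  simp [gC, gR, vecC]

lemma gC_mix {n : ℕ} (v w u : Fin n → ℝ) :
    gC (fun i => (v i : ℂ) + Complex.I * w i) (vecC u)
      = (gR v u : ℂ) + Complex.I * (gR w u : ℂ) := by
  simp only [gC, gR, vecC, add_mul, Finset.sum_add_distrib, mul_assoc, ← Finset.mul_sum]
  push_cast
  ring

lemma gC_comm {n : ℕ} (a b : Fin n → ℂ) : gC a b = gC b a := by
  unfold gC; exact Finset.sum_congr rfl fun i _ => mul_comm _ _

lemma gC_self {n : ℕ} (v w : Fin n → ℝ) :
    gC (fun i => (v i : ℂ) + Complex.I * w i) (fun i => (v i : ℂ) + Complex.I * w i)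
      = ((gR v v - gR w w : ℝ) : ℂ) + 2 * Complex.I * (gR v w : ℂ) := by
  simp only [gC, gR]
  rw [Finset.sum_congr rfl (fun i _ => show ((v i : ℂ) + Complex.I * w i) * ((v i : ℂ) + Complex.I * w i)
      = ((v i * v i - w i * w i : ℝ) : ℂ) + 2 * Complex.I * ((v i * w i : ℝ) : ℂ) by
    push_cast
    linear_combination ((w i : ℂ)) * (w i) * Complex.I_sq)]
  push_cast
  rw [Finset.sum_add_distrib, Finset.sum_sub_distrib, Finset.mul_sum]

lemma pair_nonneg (hR : IsSymmBilin R)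
    (h : ∀ ω : Matrix (Fin n) (Fin n) ℂ, IsSimple ω → IC ω ω = 0 →
      0 ≤ RC R ω (matConj ω))
    (u v w : Fin n → ℝ) (hu : gR u u ≠ 0) (hv : gR v v = 1) (hw : gR w w = 1)
    (hvw : gR v w = 0) (hvu : gR v u = 0) (hwu : gR w u = 0) :
    0 ≤ R (wedge u v) (wedge u v) + R (wedge u w) (wedge u w) := by
  set ζ : Fin n → ℂ := fun i => (v i : ℂ) + Complex.I * w i with hζ
  set ω : Matrix (Fin n) (Fin n) ℂ := wedge ζ (vecC u) with hω
  have hRe : matRe ω = wedge v u := by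
    funext i j; simp [matRe, hω, wedge, hζ, vecC]
  have hIm : matIm ω = wedge w u := by
    funext i j; simp [matIm, hω, wedge, hζ, vecC]
  have hReC : matRe (matConj ω) = wedge v u := by
    funext i j; simp [matRe, matConj, hω, wedge, hζ, vecC]
  have hImC : matIm (matConj ω) = - wedge w u := by
    funext i j; simp [matIm, matConj, hω, wedge, hζ, vecC]; ring
  have hζu : gC ζ (vecC u) = 0 := by
    rw [hζ, gC_mix, hvu, hwu]; simp
  -- ω is nonzero
  have hne : ω ≠ 0 := by
    intro h0
    have key : ∀ i, ζ i * (gR u u : ℂ) = 0 := by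
      intro i
      have hrow : ∀ j, ζ i * vecC u j - ζ j * vecC u i = 0 := by
        intro j
        have := congrFun (congrFun h0 i) j
        simpa [hω, wedge] using this
      have hzero : ∑ j, (ζ i * vecC u j - ζ j * vecC u i) * vecC u j = 0 := by
        rw [Finset.sum_congr rfl fun j _ => by rw [hrow j, zero_mul]]
        simp
      have e1 : ∑ j, ζ i * vecC u j * vecC u j = ζ i * (gR u u : ℂ) := by
        push_cast [gR, vecC]
        rw [Finset.mul_sum]
        exact Finset.sum_congr rfl fun j _ => mul_assoc _ _ _
      have e2 : ∑ j, ζ j * vecC u i * vecC u j = gC ζ (vecC u) * vecC u i := by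
        rw [gC, Finset.sum_mul]
        exact Finset.sum_congr rfl fun j _ => by ring
      have expand : ∑ j, (ζ i * vecC u j - ζ j * vecC u i) * vecC u j
          = ζ i * (gR u u : ℂ) - gC ζ (vecC u) * vecC u i := by
        simp only [sub_mul, Finset.sum_sub_distrib, e1, e2]
      rw [expand, hζu] at hzero
      simpa using hzero
    have hv0 : v = 0 := by
      funext i
      have hi := key i
      have hζi : ζ i = 0 := by
        rcases mul_eq_zero.1 hi with h' | h'
        · exact h'
        · exact absurd (by exact_mod_cast h') hu
      have := congrArg Complex.re hζi
      simpa [hζ] using this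
    rw [hv0] at hv; simp [gR] at hv
  have hsimple : IsSimple ω := ⟨hne, ζ, vecC u, rfl⟩
  have hiso : IC ω ω = 0 := by
    rw [hω, IC_wedge, gC_comm (vecC u) ζ, hζu, hζ, gC_self, hv, hw, hvw]
    simp
  have hpos := h ω hsimple hiso
  have key : RC R ω (matConj ω)
      = ((R (wedge v u) (wedge v u) + R (wedge w u) (wedge w u) : ℝ) : ℂ) := by
    rw [RC, hRe, hIm, hReC, hImC, R_neg_right hR, R_neg_right hR,
      hR.symm (wedge w u) (wedge v u)]
    push_cast
    ring
  rw [key] at hpos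
  rw [R_wedge_swap hR v u, R_wedge_swap hR w u]
  exact_mod_cast hpos
end pair

def toE {n : ℕ} (x : Fin n → ℝ) : EuclideanSpace ℝ (Fin n) := WithLp.toLp 2 x

lemma gR_inner {n : ℕ} (x y : EuclideanSpace ℝ (Fin n)) :
    (inner ℝ x y : ℝ) = gR x y := by
  simp [gR, PiLp.inner_apply, RCLike.inner_apply, starRingEnd_apply, star_trivial]
  exact Finset.sum_congr rfl fun i _ => mul_comm _ _

lemma exists_good_family {n : ℕ} (u : Fin n → ℝ) (hu : gR u u ≠ 0) (i₀ : Fin n) :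
    ∃ f : Fin n → (Fin n → ℝ),
      (∀ a b, gR (f a) (f b) = if a = b then 1 else 0) ∧
      (∃ c : ℝ, f i₀ = c • u) ∧
      (∀ j k, ∑ a, f a j * f a k = if j = k then 1 else 0) := by
  classical
  have huE0 : toE u ≠ 0 := by
    intro h0
    apply hu
    have h1 : u = 0 := by simpa [toE] using congrArg WithLp.ofLp h0
    rw [h1]; simp [gR]
  have hunorm : ‖(‖toE u‖⁻¹ • toE u)‖ = 1 := norm_smul_inv_norm huE0
  have hon : Orthonormal ℝ
      (({i₀} : Set (Fin n)).restrict (fun _ : Fin n => ‖toE u‖⁻¹ • toE u)) := by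
    rw [orthonormal_iff_ite]
    rintro ⟨i, hi⟩ ⟨j, hj⟩
    simp only [Set.mem_singleton_iff] at hi hj
    have heq : (⟨i, hi⟩ : ({i₀} : Set (Fin n))) = ⟨j, hj⟩ := by
      apply Subtype.ext; simp [hi, hj]
    rw [heq, if_pos rfl]
    show inner ℝ (‖toE u‖⁻¹ • toE u) (‖toE u‖⁻¹ • toE u) = (1:ℝ)
    rw [real_inner_self_eq_norm_mul_norm, hunorm]; norm_num
  obtain ⟨b, hb⟩ := hon.exists_orthonormalBasis_extension_of_card_eq
    (by simp [finrank_euclideanSpace])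
  have hb0 : b i₀ = ‖toE u‖⁻¹ • toE u := hb i₀ rfl
  refine ⟨fun a => b a, ?_, ⟨‖toE u‖⁻¹, ?_⟩, ?_⟩
  · intro a a'
    rw [← gR_inner]
    exact orthonormal_iff_ite.1 b.orthonormal a a'
  · show (b i₀).ofLp = _
    rw [hb0]; rfl
  · intro j k
    have key := b.sum_inner_mul_inner (EuclideanSpace.single j (1:ℝ))
      (EuclideanSpace.single k (1:ℝ))
    have e1 : ∀ a, (inner ℝ (EuclideanSpace.single j (1:ℝ)) (b a) : ℝ) = b a j := by
      intro a; rw [EuclideanSpace.inner_single_left]; simp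
    have e2 : ∀ a, (inner ℝ (b a) (EuclideanSpace.single k (1:ℝ)) : ℝ) = b a k := by
      intro a; rw [EuclideanSpace.inner_single_right]; simp
    rw [Finset.sum_congr rfl fun a _ => by rw [e1 a, e2 a]] at key
    rw [key, EuclideanSpace.inner_single_left]
    simp [EuclideanSpace.single_apply]

lemma gR_smul_right {n : ℕ} (x y : Fin n → ℝ) (c : ℝ) : gR x (c • y) = c * gR x y := by
  simp only [gR, Pi.smul_apply, smul_eq_mul, Finset.mul_sum]
  exact Finset.sum_congr rfl fun i _ => by ring

theorem stmt_8 (n : ℕ) (hn : 3 ≤ n) (R : CurvOp n) (hR : IsSymmBilin R) (hB : Bianchi R)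
    (h : ∀ ω : Matrix (Fin n) (Fin n) ℂ, IsSimple ω → IC ω ω = 0 →
      0 ≤ RC R ω (matConj ω)) :
    ∀ u : Fin n → ℝ, 0 ≤ Ric R u := by
  intro u
  classical
  by_cases hu0 : gR u u = 0
  · -- u = 0
    have hu : u = 0 := by
      funext i
      have h1 : ∑ i, u i * u i = 0 := hu0
      have h2 := (Finset.sum_eq_zero_iff_of_nonneg
        (fun i _ => mul_self_nonneg (u i))).1 h1 i (Finset.mem_univ i)
      exact mul_self_eq_zero.1 h2
    subst hu
    have hz : ∀ j, wedge (0 : Fin n → ℝ) (stdB n j) = (0 : Matrix (Fin n) (Fin n) ℝ) := by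
      intro j; funext i k; simp [wedge]
    unfold Ric
    rw [Finset.sum_congr rfl fun j _ => by rw [hz j, R_zero_left hR]]
    simp
  · set i₀ : Fin n := ⟨0, by omega⟩ with hi₀
    obtain ⟨f, hortho, ⟨c, hc⟩, hcomp⟩ := exists_good_family u hu0 i₀
    set Q : (Fin n → ℝ) → ℝ := fun v => R (wedge u v) (wedge u v) with hQdef
    -- trace identity
    have trace : ∑ a, Q (f a) = Ric R u := by
      rw [Finset.sum_congr rfl fun a _ => Q_expand hR u (f a), Finset.sum_comm]
      rw [Finset.sum_congr rfl fun j _ => Finset.sum_comm]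
      rw [Finset.sum_congr rfl fun j _ => Finset.sum_congr rfl fun k _ => by
        rw [← Finset.sum_mul, hcomp j k]]
      simp [Ric, ite_mul]
    -- Q at i₀ vanishes
    have hQ0 : Q (f i₀) = 0 := by
      have hz : wedge u (c • u) = (0 : Matrix (Fin n) (Fin n) ℝ) := by
        funext i k; simp [wedge]; ring
      show R (wedge u (f i₀)) (wedge u (f i₀)) = 0
      rw [hc, hz, R_zero_left hR]
    set s : Finset (Fin n) := Finset.univ.erase i₀ with hs
    have hcard : s.card = n - 1 := by
      rw [hs, Finset.card_erase_of_mem (Finset.mem_univ _)]; simp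
    have hs2 : 2 ≤ s.card := by omega
    have hc0 : c ≠ 0 := by
      intro h0
      rw [h0, zero_smul] at hc
      have h1 := hortho i₀ i₀
      rw [if_pos rfl, hc] at h1
      simp [gR] at h1
    have hfu : ∀ a ∈ s, gR (f a) u = 0 := by
      intro a ha
      have h1 := hortho a i₀
      rw [if_neg (Finset.ne_of_mem_erase ha), hc, gR_smul_right] at h1
      exact (mul_eq_zero.1 h1).resolve_left hc0
    have hpair : ∀ a ∈ s, ∀ a' ∈ s, a ≠ a' → 0 ≤ Q (f a) + Q (f a') := by
      intro a ha a' ha' hne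
      apply pair_nonneg hR h u (f a) (f a') hu0
      · have := hortho a a; rwa [if_pos rfl] at this
      · have := hortho a' a'; rwa [if_pos rfl] at this
      · have := hortho a a'; rwa [if_neg hne] at this
      · exact hfu a ha
      · exact hfu a' ha'
    set S : ℝ := ∑ a ∈ s, Q (f a) with hS
    have big : 0 ≤ ∑ a ∈ s, ∑ a' ∈ s.erase a, (Q (f a) + Q (f a')) :=
      Finset.sum_nonneg fun a ha => Finset.sum_nonneg fun a' ha' =>
        hpair a ha a' (Finset.mem_of_mem_erase ha')
          (Ne.symm (Finset.ne_of_mem_erase ha'))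
    have inner_eq : ∀ a ∈ s, ∑ a' ∈ s.erase a, (Q (f a) + Q (f a'))
        = ((s.card : ℝ) - 1) * Q (f a) + (S - Q (f a)) := by
      intro a ha
      rw [Finset.sum_add_distrib, Finset.sum_const, Finset.card_erase_of_mem ha,
        Finset.sum_erase_eq_sub ha, nsmul_eq_mul, Nat.cast_sub (by omega : 1 ≤ s.card)]
      push_cast
      rw [hS]
    have expand : ∑ a ∈ s, ∑ a' ∈ s.erase a, (Q (f a) + Q (f a'))
        = (2 * (s.card : ℝ) - 2) * S := by
      rw [Finset.sum_congr rfl inner_eq, Finset.sum_add_distrib, Finset.sum_sub_distrib,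
        ← Finset.mul_sum, Finset.sum_const, nsmul_eq_mul, ← hS]
      ring
    rw [expand] at big
    have hSpos : 0 ≤ S := by
      have hm : (2:ℝ) ≤ (s.card : ℝ) := by exact_mod_cast hs2
      nlinarith [big]
    rw [← trace, ← Finset.add_sum_erase _ _ (Finset.mem_univ i₀), ← hs, ← hS, hQ0, zero_add]
    exact hSpos
end
end

section
/- With G as defined, every 𝓢 ∈ G satisfies 𝓢 + 𝓘 ∈ C_PIC2; that is, G ⊆ {𝓡 : 𝓡 + 𝓘 ∈ C_PIC2}, where 𝓘 is the curvature tensor of constant sectional curvature 1. -/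
open scoped BigOperators ComplexOrder
open Complex Matrix

noncomputable section

def CPIC2 (n : ℕ) : Set (CurvOp n) :=
  {R | IsSymmBilin R ∧ Bianchi R ∧
    ∀ ω : Matrix (Fin n) (Fin n) ℂ, IsSimple ω → 0 ≤ RC R ω (matConj ω)}

def CPIC1 (n : ℕ) : Set (CurvOp n) :=
  {R | IsSymmBilin R ∧ Bianchi R ∧
    ∀ ω : Matrix (Fin n) (Fin n) ℂ, IsSimple ω → IC ω ω = 0 → 0 ≤ RC R ω (matConj ω)}

def Gset (n : ℕ) : Set (CurvOp n) :=
  {R | IsSymmBilin R ∧ Bianchi R ∧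
    ∀ ω : Matrix (Fin n) (Fin n) ℂ, IsSimple ω →
      0 ≤ RC R ω (matConj ω) + (‖IC ω ω‖ : ℂ)}

section Aux

variable {n : ℕ}

lemma gR_comm (a b : Fin n → ℝ) : gR a b = gR b a := by
  simp [gR, mul_comm]

lemma IR_wedge (v w x y : Fin n → ℝ) :
    IR (wedge v w) (wedge x y) = gR v x * gR w y - gR v y * gR w x := by
  have h : ∀ i j : Fin n, (v i * w j - v j * w i) * (x i * y j - x j * y i)
      = (v i * x i) * (w j * y j) + (v j * x j) * (w i * y i)
        - (v i * y i) * (w j * x j) - (v j * y j) * (w i * x i) := by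
    intros; ring
  simp only [IR, wedge, gR, h, Finset.sum_add_distrib, Finset.sum_sub_distrib,
    ← Finset.sum_mul, ← Finset.mul_sum]
  ring

lemma IR_bianchi : Bianchi (IR (n := n)) := by
  intro v w x y
  simp only [IR_wedge]
  rw [gR_comm x w, gR_comm y x, gR_comm y w]
  ring

lemma IR_symmBilin : IsSymmBilin (IR (n := n)) := by
  refine ⟨fun α β γ => ?_, fun c α β => ?_, fun α β => ?_⟩
  · simp [IR, Matrix.add_apply, add_mul, Finset.sum_add_distrib]; ring
  · have e : ∑ i, ∑ j, (c • α) i j * β i j = c * ∑ i, ∑ j, α i j * β i j := by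
      rw [Finset.mul_sum]
      refine Finset.sum_congr rfl fun i _ => ?_
      rw [Finset.mul_sum]
      exact Finset.sum_congr rfl fun j _ => by simp [Matrix.smul_apply]; ring
    rw [IR, IR, e]; ring
  · simp [IR, mul_comm]

lemma IR_self_nonneg (α : Matrix (Fin n) (Fin n) ℝ) : 0 ≤ IR α α := by
  have : ∀ i j : Fin n, (0:ℝ) ≤ α i j * α i j := fun i j => mul_self_nonneg _
  unfold IR
  have h : (0:ℝ) ≤ ∑ i, ∑ j, α i j * α i j :=
    Finset.sum_nonneg fun i _ => Finset.sum_nonneg fun j _ => this i j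
  linarith

lemma IR_cs (α β : Matrix (Fin n) (Fin n) ℝ) : IR α β ^ 2 ≤ IR α α * IR β β := by
  have h := Finset.sum_mul_sq_le_sq_mul_sq Finset.univ
    (fun p : Fin n × Fin n => α p.1 p.2) (fun p : Fin n × Fin n => β p.1 p.2)
  have e : ∀ f : Fin n → Fin n → ℝ,
      (∑ p : Fin n × Fin n, f p.1 p.2) = ∑ i, ∑ j, f i j := fun f =>
    Fintype.sum_prod_type _
  rw [IR, IR, IR]
  simp only [← pow_two]
  rw [← e (fun i j => α i j * β i j), ← e (fun i j => α i j ^ 2),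
    ← e (fun i j => β i j ^ 2)]
  nlinarith [h]

lemma matRe_conj (ω : Matrix (Fin n) (Fin n) ℂ) : matRe (matConj ω) = matRe ω := by
  funext i j; simp [matRe, matConj]

lemma matIm_conj (ω : Matrix (Fin n) (Fin n) ℂ) : matIm (matConj ω) = -(matIm ω) := by
  funext i j; simp [matIm, matConj]

lemma bilin_neg_right {R : CurvOp n} (h : IsSymmBilin R) (α β : Matrix (Fin n) (Fin n) ℝ) :
    R α (-β) = -(R α β) := by
  rw [h.symm, ← neg_one_smul ℝ β, h.smul_left, h.symm]; ring

lemma RC_conj_symm {R : CurvOp n} (h : IsSymmBilin R) (ω : Matrix (Fin n) (Fin n) ℂ) :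
    RC R ω (matConj ω) = ((R (matRe ω) (matRe ω) + R (matIm ω) (matIm ω) : ℝ) : ℂ) := by
  rw [RC, matRe_conj, matIm_conj, bilin_neg_right h, bilin_neg_right h,
    h.symm (matIm ω) (matRe ω)]
  push_cast; ring

lemma RC_add (R Q : CurvOp n) (ω η : Matrix (Fin n) (Fin n) ℂ) :
    RC (fun a b => R a b + Q a b) ω η = RC R ω η + RC Q ω η := by
  simp only [RC]; push_cast; ring

lemma IC_re (ω : Matrix (Fin n) (Fin n) ℂ) :
    (IC ω ω).re = IR (matRe ω) (matRe ω) - IR (matIm ω) (matIm ω) := by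
  simp only [IC, IR, matRe, matIm, Complex.mul_re, Complex.re_sum, Complex.im_sum,
    Finset.sum_sub_distrib, mul_sub]
  norm_num

lemma IC_im (ω : Matrix (Fin n) (Fin n) ℂ) :
    (IC ω ω).im = 2 * IR (matRe ω) (matIm ω) := by
  simp only [IC, IR, matRe, matIm, Complex.mul_im, Complex.re_sum, Complex.im_sum]
  have h : ∀ i j : Fin n, (ω i j).re * (ω i j).im + (ω i j).im * (ω i j).re
      = 2 * ((ω i j).re * (ω i j).im) := fun i j => by ring
  simp only [h, ← Finset.mul_sum]
  norm_num
  try ring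

end Aux

theorem stmt_13 (n : ℕ) :
    Gset n ⊆ {R : CurvOp n | (fun α β => R α β + IR α β) ∈ CPIC2 n} := by
  intro R hR
  obtain ⟨hSym, hBia, hPos⟩ := hR
  have hSymS : IsSymmBilin (fun α β => R α β + IR α β : CurvOp n) := by
    refine ⟨fun α β γ => ?_, fun c α β => ?_, fun α β => ?_⟩
    · rw [hSym.add_left, IR_symmBilin.add_left]; ring
    · rw [hSym.smul_left, IR_symmBilin.smul_left]; ring
    · rw [hSym.symm, IR_symmBilin.symm]
  refine ⟨hSymS, ?_, ?_⟩
  · intro v w x y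
    have h1 := hBia v w x y
    have h2 := IR_bianchi v w x y
    simp only []
    linarith
  · intro ω hω
    have key := hPos ω hω
    set a := IR (matRe ω) (matRe ω) with ha
    set b := IR (matIm ω) (matIm ω) with hb
    set c := IR (matRe ω) (matIm ω) with hc
    have habs : ‖IC ω ω‖ ≤ a + b := by
      have h1 : ‖IC ω ω‖ = Real.sqrt ((a - b) ^ 2 + (2 * c) ^ 2) := by
        rw [Complex.norm_def, Complex.normSq_apply, IC_re, IC_im]
        ring_nf
        rfl
      have hcs := IR_cs (matRe ω) (matIm ω)
      have hA := IR_self_nonneg (matRe ω)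
      have hB := IR_self_nonneg (matIm ω)
      rw [h1]
      have h2 : (a - b) ^ 2 + (2 * c) ^ 2 ≤ (a + b) ^ 2 := by nlinarith
      calc Real.sqrt ((a - b) ^ 2 + (2 * c) ^ 2) ≤ Real.sqrt ((a + b) ^ 2) :=
            Real.sqrt_le_sqrt h2
        _ = a + b := by rw [Real.sqrt_sq (by linarith)]
    have key' : (0:ℝ) ≤ R (matRe ω) (matRe ω) + R (matIm ω) (matIm ω)
        + ‖IC ω ω‖ := by
      rw [RC_conj_symm hSym, ← Complex.ofReal_add] at key
      exact_mod_cast key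
    rw [RC_add, RC_conj_symm hSym, RC_conj_symm IR_symmBilin, ← Complex.ofReal_add]
    have : (0:ℝ) ≤ R (matRe ω) (matRe ω) + R (matIm ω) (matIm ω) + (a + b) := by
      linarith
    exact_mod_cast this
end
end
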